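/- Let σ > 0 and for δ > 0 let g_σ and g_{σ+δ} be the densities of the centered normal distributions N(0, σ²) and N(0, (σ+δ)²). Then, as δ → 0⁺, (1/δ) · ∫_{−∞}^{∞} |g_σ(x) − g_{σ+δ}(x)| dx tends to √(8/(e·π·σ²)). Equivalently, ∫ |g_σ − g_{σ+δ}| = δ·√(8/(eπσ²)) + o(δ). -/

import Mathlib

open Real MeasureTheory Filter

/-- The centered Gaussian density with standard deviation `σ`. -/
noncomputable def gaussianDensity (σ : ℝ) (x : ℝ) : ℝ :=
  (σ * Real.sqrt (2 * π))⁻¹ * Real.exp (-(x ^ 2) / (2 * σ ^ 2))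

lemma gd_pos {s : ℝ} (hs : 0 < s) (x : ℝ) : 0 < gaussianDensity s x := by
  unfold gaussianDensity
  positivity

lemma gd_cont : Continuous (gaussianDensity 1) := by
  unfold gaussianDensity; fun_prop

lemma gd_eq {s : ℝ} (hs : 0 < s) (x : ℝ) :
    gaussianDensity s x = s⁻¹ * gaussianDensity 1 (x / s) := by
  unfold gaussianDensity
  rw [show -((x / s) ^ 2) / (2 * (1:ℝ) ^ 2) = -(x ^ 2) / (2 * s ^ 2) by
    field_simp]
  rw [one_mul, mul_inv, mul_assoc]

lemma integrable_gd {s : ℝ} (hs : 0 < s) : Integrable (gaussianDensity s) := by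
  unfold gaussianDensity
  have h : ∀ x : ℝ, -(x ^ 2) / (2 * s ^ 2) = -(1 / (2 * s ^ 2)) * x ^ 2 := fun x => by ring
  simp_rw [h]
  exact (integrable_exp_neg_mul_sq (by positivity)).const_mul _

lemma integral_gd {s : ℝ} (hs : 0 < s) : ∫ x : ℝ, gaussianDensity s x = 1 := by
  unfold gaussianDensity
  have h : ∀ x : ℝ, -(x ^ 2) / (2 * s ^ 2) = -(1 / (2 * s ^ 2)) * x ^ 2 := fun x => by ring
  simp_rw [h]
  rw [integral_const_mul, integral_gaussian]
  rw [show π / (1 / (2 * s ^ 2)) = (2 * π) * s ^ 2 by field_simp]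
  rw [Real.sqrt_mul (by positivity : (0:ℝ) ≤ 2 * π) (s ^ 2), Real.sqrt_sq hs.le]
  have hA : Real.sqrt (2 * π) ≠ 0 := by positivity
  field_simp

lemma gd_le_iff {s t x : ℝ} (hs : 0 < s) (hst : s < t) :
    gaussianDensity t x ≤ gaussianDensity s x ↔
      x ^ 2 ≤ 2 * s ^ 2 * t ^ 2 * Real.log (t / s) / (t ^ 2 - s ^ 2) := by
  have ht : 0 < t := hs.trans hst
  have hP : (0:ℝ) < t ^ 2 - s ^ 2 := by nlinarith
  have hQ : (0:ℝ) < 2 * s ^ 2 * t ^ 2 := by positivity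
  have h1 : gaussianDensity t x ≤ gaussianDensity s x ↔
      Real.exp (-(x ^ 2) / (2 * t ^ 2)) * s ≤ Real.exp (-(x ^ 2) / (2 * s ^ 2)) * t := by
    unfold gaussianDensity
    rw [inv_mul_eq_div, inv_mul_eq_div, div_le_div_iff₀ (by positivity) (by positivity),
      ← mul_assoc, ← mul_assoc,
      mul_le_mul_iff_of_pos_right (by positivity : (0:ℝ) < Real.sqrt (2 * π))]
  have hvu : x ^ 2 / (2 * s ^ 2) - x ^ 2 / (2 * t ^ 2)
      = x ^ 2 * (t ^ 2 - s ^ 2) / (2 * s ^ 2 * t ^ 2) := by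
    field_simp
  have hlog : Real.log (t / s) = Real.log t - Real.log s := Real.log_div ht.ne' hs.ne'
  have h2 : Real.exp (-(x ^ 2) / (2 * t ^ 2)) * s ≤ Real.exp (-(x ^ 2) / (2 * s ^ 2)) * t ↔
      x ^ 2 * (t ^ 2 - s ^ 2) ≤ 2 * s ^ 2 * t ^ 2 * Real.log (t / s) := by
    rw [← Real.log_le_log_iff (by positivity) (by positivity),
      Real.log_mul (Real.exp_ne_zero _) hs.ne', Real.log_mul (Real.exp_ne_zero _) ht.ne',
      Real.log_exp, Real.log_exp, hlog]
    have e1 : -(x ^ 2) / (2 * t ^ 2) = -(x ^ 2 / (2 * t ^ 2)) := by ring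
    have e2 : -(x ^ 2) / (2 * s ^ 2) = -(x ^ 2 / (2 * s ^ 2)) := by ring
    constructor
    · intro h
      have h' : x ^ 2 * (t ^ 2 - s ^ 2) / (2 * s ^ 2 * t ^ 2) ≤ Real.log t - Real.log s := by
        rw [← hvu]; linarith
      calc x ^ 2 * (t ^ 2 - s ^ 2)
          = (x ^ 2 * (t ^ 2 - s ^ 2) / (2 * s ^ 2 * t ^ 2)) * (2 * s ^ 2 * t ^ 2) := by
            field_simp
        _ ≤ (Real.log t - Real.log s) * (2 * s ^ 2 * t ^ 2) :=
            mul_le_mul_of_nonneg_right h' hQ.le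
        _ = 2 * s ^ 2 * t ^ 2 * (Real.log t - Real.log s) := by ring
    · intro h
      have h' : x ^ 2 * (t ^ 2 - s ^ 2) / (2 * s ^ 2 * t ^ 2) ≤ Real.log t - Real.log s := by
        rw [div_le_iff₀ hQ]; linarith
      rw [← hvu] at h'; linarith
  rw [h1, h2, le_div_iff₀ hP]

lemma gd_ge_iff {s t x : ℝ} (hs : 0 < s) (hst : s < t) :
    gaussianDensity s x ≤ gaussianDensity t x ↔
      2 * s ^ 2 * t ^ 2 * Real.log (t / s) / (t ^ 2 - s ^ 2) ≤ x ^ 2 := by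
  have ht : 0 < t := hs.trans hst
  have hP : (0:ℝ) < t ^ 2 - s ^ 2 := by nlinarith
  have hQ : (0:ℝ) < 2 * s ^ 2 * t ^ 2 := by positivity
  have h1 : gaussianDensity s x ≤ gaussianDensity t x ↔
      Real.exp (-(x ^ 2) / (2 * s ^ 2)) * t ≤ Real.exp (-(x ^ 2) / (2 * t ^ 2)) * s := by
    unfold gaussianDensity
    rw [inv_mul_eq_div, inv_mul_eq_div, div_le_div_iff₀ (by positivity) (by positivity),
      ← mul_assoc, ← mul_assoc,
      mul_le_mul_iff_of_pos_right (by positivity : (0:ℝ) < Real.sqrt (2 * π))]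
  have hvu : x ^ 2 / (2 * s ^ 2) - x ^ 2 / (2 * t ^ 2)
      = x ^ 2 * (t ^ 2 - s ^ 2) / (2 * s ^ 2 * t ^ 2) := by
    field_simp
  have hlog : Real.log (t / s) = Real.log t - Real.log s := Real.log_div ht.ne' hs.ne'
  have h2 : Real.exp (-(x ^ 2) / (2 * s ^ 2)) * t ≤ Real.exp (-(x ^ 2) / (2 * t ^ 2)) * s ↔
      2 * s ^ 2 * t ^ 2 * Real.log (t / s) ≤ x ^ 2 * (t ^ 2 - s ^ 2) := by
    rw [← Real.log_le_log_iff (by positivity) (by positivity),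
      Real.log_mul (Real.exp_ne_zero _) ht.ne', Real.log_mul (Real.exp_ne_zero _) hs.ne',
      Real.log_exp, Real.log_exp, hlog]
    have e1 : -(x ^ 2) / (2 * t ^ 2) = -(x ^ 2 / (2 * t ^ 2)) := by ring
    have e2 : -(x ^ 2) / (2 * s ^ 2) = -(x ^ 2 / (2 * s ^ 2)) := by ring
    constructor
    · intro h
      have h' : Real.log t - Real.log s ≤ x ^ 2 * (t ^ 2 - s ^ 2) / (2 * s ^ 2 * t ^ 2) := by
        rw [← hvu]; linarith
      calc 2 * s ^ 2 * t ^ 2 * (Real.log t - Real.log s)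
          ≤ 2 * s ^ 2 * t ^ 2 * (x ^ 2 * (t ^ 2 - s ^ 2) / (2 * s ^ 2 * t ^ 2)) :=
            mul_le_mul_of_nonneg_left h' hQ.le
        _ = x ^ 2 * (t ^ 2 - s ^ 2) := by field_simp
    · intro h
      have h' : Real.log t - Real.log s ≤ x ^ 2 * (t ^ 2 - s ^ 2) / (2 * s ^ 2 * t ^ 2) := by
        rw [le_div_iff₀ hQ]; linarith
      rw [← hvu] at h'; linarith
  rw [h1, h2, div_le_iff₀ hP]

noncomputable def gc (σ δ : ℝ) : ℝ :=
  Real.sqrt (2 * σ ^ 2 * (σ + δ) ^ 2 * Real.log ((σ + δ) / σ) / ((σ + δ) ^ 2 - σ ^ 2))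

lemma gcK_pos {σ δ : ℝ} (hσ : 0 < σ) (hδ : 0 < δ) :
    0 < 2 * σ ^ 2 * (σ + δ) ^ 2 * Real.log ((σ + δ) / σ) / ((σ + δ) ^ 2 - σ ^ 2) := by
  have h1 : 0 < Real.log ((σ + δ) / σ) :=
    Real.log_pos (by rw [lt_div_iff₀ hσ]; linarith)
  have h2 : (0:ℝ) < (σ + δ) ^ 2 - σ ^ 2 := by nlinarith
  positivity

lemma gc_pos {σ δ : ℝ} (hσ : 0 < σ) (hδ : 0 < δ) : 0 < gc σ δ :=
  Real.sqrt_pos.mpr (gcK_pos hσ hδ)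

lemma gc_sq {σ δ : ℝ} (hσ : 0 < σ) (hδ : 0 < δ) :
    (gc σ δ) ^ 2 = 2 * σ ^ 2 * (σ + δ) ^ 2 * Real.log ((σ + δ) / σ) / ((σ + δ) ^ 2 - σ ^ 2) :=
  Real.sq_sqrt (gcK_pos hσ hδ).le

lemma scale_int {s c : ℝ} (hs : 0 < s) :
    (∫ x in (-c)..c, gaussianDensity s x) = ∫ u in (-(c/s))..(c/s), gaussianDensity 1 u := by
  simp_rw [gd_eq hs]
  rw [intervalIntegral.integral_const_mul,
    intervalIntegral.integral_comp_div (gaussianDensity 1) hs.ne', neg_div,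
    smul_eq_mul, ← mul_assoc, inv_mul_cancel₀ hs.ne', one_mul]

lemma L1_eq {σ δ : ℝ} (hσ : 0 < σ) (hδ : 0 < δ) :
    ∫ x : ℝ, |gaussianDensity σ x - gaussianDensity (σ + δ) x| =
      2 * ((∫ u in (-(gc σ δ / σ))..(gc σ δ / σ), gaussianDensity 1 u)
         - (∫ u in (-(gc σ δ / (σ + δ)))..(gc σ δ / (σ + δ)), gaussianDensity 1 u)) := by
  have ht : 0 < σ + δ := by linarith
  have hlt : σ < σ + δ := by linarith
  set c := gc σ δ with hcdef
  have hc : 0 < c := gc_pos hσ hδ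
  have hc2 := gc_sq hσ hδ
  set d := fun x => gaussianDensity σ x - gaussianDensity (σ + δ) x with hd
  have hInt : Integrable d := (integrable_gd hσ).sub (integrable_gd ht)
  have hsign_in : Set.EqOn (fun x => |d x|) d (Set.Ioc (-c) c) := by
    intro x hx
    simp only [hd]
    apply abs_of_nonneg
    rw [sub_nonneg, gd_le_iff hσ hlt, ← hc2]
    exact sq_le_sq' (by linarith [hx.1]) hx.2
  have hsign_out : Set.EqOn (fun x => |d x|) (fun x => -(d x)) (Set.Ioc (-c) c)ᶜ := by
    intro x hx
    simp only [hd]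
    apply abs_of_nonpos
    rw [sub_nonpos, gd_ge_iff hσ hlt, ← hc2]
    rw [Set.mem_compl_iff, Set.mem_Ioc, not_and_or, not_lt, not_le] at hx
    rcases hx with h | h
    · nlinarith
    · nlinarith
  have h1 : ∫ x in Set.Ioc (-c) c, |d x| = ∫ x in Set.Ioc (-c) c, d x :=
    setIntegral_congr_fun measurableSet_Ioc hsign_in
  have h2 : ∫ x in (Set.Ioc (-c) c)ᶜ, |d x| = - ∫ x in (Set.Ioc (-c) c)ᶜ, d x := by
    rw [← integral_neg]
    exact setIntegral_congr_fun measurableSet_Ioc.compl hsign_out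
  have h4 : ∫ x, d x = 0 := by
    rw [hd]
    rw [integral_sub (integrable_gd hσ) (integrable_gd ht), integral_gd hσ, integral_gd ht,
      sub_self]
  have h3 : ∫ x in (Set.Ioc (-c) c)ᶜ, d x = - ∫ x in Set.Ioc (-c) c, d x := by
    have := integral_add_compl (s := Set.Ioc (-c) c) measurableSet_Ioc hInt (f := d)
    rw [h4] at this
    linarith
  have habs : ∫ x : ℝ, |d x| = 2 * ∫ x in Set.Ioc (-c) c, d x := by
    rw [← integral_add_compl (s := Set.Ioc (-c) c) measurableSet_Ioc hInt.abs (f := fun x => |d x|), h1, h2, h3]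
    ring
  have h5 : ∫ x in Set.Ioc (-c) c, d x = ∫ x in (-c)..c, d x :=
    (intervalIntegral.integral_of_le (by linarith)).symm
  have h6 : ∫ x in (-c)..c, d x = (∫ u in (-(c/σ))..(c/σ), gaussianDensity 1 u)
      - ∫ u in (-(c/(σ+δ)))..(c/(σ+δ)), gaussianDensity 1 u := by
    rw [hd, intervalIntegral.integral_sub (integrable_gd hσ).intervalIntegrable
      (integrable_gd ht).intervalIntegrable, scale_int hσ, scale_int ht]
  rw [habs, h5, h6]

noncomputable def gH (r : ℝ) : ℝ := ∫ u in (0:ℝ)..r, gaussianDensity 1 u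
noncomputable def gG (r : ℝ) : ℝ := ∫ u in (-r)..r, gaussianDensity 1 u

lemma gG_eq (r : ℝ) : gG r = gH r - gH (-r) := by
  unfold gG gH
  rw [intervalIntegral.integral_interval_sub_left (integrable_gd one_pos).intervalIntegrable
    (integrable_gd one_pos).intervalIntegrable]

lemma gH_strict (y : ℝ) : HasStrictDerivAt gH (gaussianDensity 1 y) y :=
  intervalIntegral.integral_hasStrictDerivAt_right
    (integrable_gd one_pos).intervalIntegrable
    (gd_cont.stronglyMeasurable.stronglyMeasurableAtFilter) gd_cont.continuousAt

lemma gG_strict : HasStrictDerivAt gG (2 * gaussianDensity 1 1) 1 := by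
  have h2 : HasStrictDerivAt (fun r : ℝ => gH (-r)) (gaussianDensity 1 (-1) * (-1)) 1 := by
    have hneg : HasStrictDerivAt (fun r : ℝ => -r) (-1) 1 := (hasStrictDerivAt_id (1:ℝ)).neg
    exact (gH_strict (-1)).comp 1 hneg
  have hsub : HasStrictDerivAt (fun r : ℝ => gH r - gH (-r))
      (gaussianDensity 1 1 - gaussianDensity 1 (-1) * -1) 1 := (gH_strict 1).sub h2
  have heq : (fun r : ℝ => gH r - gH (-r)) = gG := funext fun r => (gG_eq r).symm
  rw [heq] at hsub
  convert hsub using 1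
  have : gaussianDensity 1 (-1) = gaussianDensity 1 1 := by unfold gaussianDensity; norm_num
  rw [this]; ring

lemma const_eq {σ : ℝ} (hσ : 0 < σ) :
    Real.sqrt (8 / (Real.exp 1 * π * σ ^ 2)) = 4 * gaussianDensity 1 1 * σ⁻¹ := by
  have h : 8 / (Real.exp 1 * π * σ ^ 2) = (4 * gaussianDensity 1 1 * σ⁻¹) ^ 2 := by
    unfold gaussianDensity
    rw [one_mul]
    set A := Real.sqrt (2 * π) with hA
    set E := Real.exp (-(1:ℝ) ^ 2 / (2 * 1 ^ 2)) with hE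
    have h1 : A ^ 2 = 2 * π := Real.sq_sqrt (by positivity)
    have h2 : E ^ 2 = (Real.exp 1)⁻¹ := by
      rw [hE, sq, ← Real.exp_add]
      norm_num [Real.exp_neg]
    have hA0 : A ≠ 0 := by rw [hA]; positivity
    have he : Real.exp 1 ≠ 0 := Real.exp_ne_zero 1
    have : (4 * (A⁻¹ * E) * σ⁻¹) ^ 2 = 16 * E ^ 2 * (A ^ 2)⁻¹ * (σ ^ 2)⁻¹ := by
      rw [mul_pow, mul_pow, mul_pow, inv_pow, inv_pow]; ring
    rw [this, h1, h2]
    field_simp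
    ring
  rw [h]
  apply Real.sqrt_sq
  have := gd_pos one_pos 1
  positivity

lemma L1_eq' {σ δ : ℝ} (hσ : 0 < σ) (hδ : 0 < δ) :
    ∫ x : ℝ, |gaussianDensity σ x - gaussianDensity (σ + δ) x| =
      2 * (gG (gc σ δ / σ) - gG (gc σ δ / (σ + δ))) := by
  rw [L1_eq hσ hδ]; rfl


/-- As `δ → 0⁺`, the L¹ distance between the densities of `N(0,σ²)` and
`N(0,(σ+δ)²)` equals `δ √(8/(eπσ²)) + o(δ)`, i.e. `δ⁻¹ ∫|g_σ − g_{σ+δ}|` tends to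
`√(8/(eπσ²))`. -/
theorem variational_distance_gaussians_first_order (σ : ℝ) (hσ : 0 < σ) :
    Tendsto (fun δ : ℝ => δ⁻¹ * ∫ x : ℝ, |gaussianDensity σ x - gaussianDensity (σ + δ) x|)
      (nhdsWithin 0 (Set.Ioi 0))
      (nhds (Real.sqrt (8 / (Real.exp 1 * π * σ ^ 2)))) := by
  have htσδ : Tendsto (fun δ : ℝ => σ + δ) (nhdsWithin 0 (Set.Ioi 0)) (nhds σ) := by
    have h0 : Tendsto (fun δ : ℝ => σ + δ) (nhds 0) (nhds (σ + 0)) :=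
      Continuous.tendsto (by fun_prop) 0
    rw [add_zero] at h0
    exact h0.mono_left nhdsWithin_le_nhds
  have hslope : Tendsto (fun δ : ℝ => Real.log ((σ + δ) / σ) / δ)
      (nhdsWithin 0 (Set.Ioi 0)) (nhds σ⁻¹) := by
    have hd : Tendsto (slope Real.log σ) (nhdsWithin σ {σ}ᶜ) (nhds σ⁻¹) :=
      hasDerivAt_iff_tendsto_slope.mp (Real.hasDerivAt_log hσ.ne')
    have hmap : Tendsto (fun δ : ℝ => σ + δ) (nhdsWithin 0 (Set.Ioi 0))
        (nhdsWithin σ {σ}ᶜ) := by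
      apply tendsto_nhdsWithin_of_tendsto_nhds_of_eventually_within _ htσδ
      filter_upwards [self_mem_nhdsWithin] with δ hδ
      have hδ' : (0:ℝ) < δ := hδ
      simp only [Set.mem_compl_iff, Set.mem_singleton_iff]
      intro h
      have : δ = 0 := by linarith [h.symm.le, h.le]
      linarith
    have hcmp := hd.comp hmap
    apply hcmp.congr'
    filter_upwards [self_mem_nhdsWithin] with δ hδ
    have hδ' : (0:ℝ) < δ := hδ
    simp only [Function.comp_apply, slope_def_field]
    rw [Real.log_div (by linarith) hσ.ne', add_sub_cancel_left]
  have hcT : Tendsto (fun δ : ℝ => gc σ δ) (nhdsWithin 0 (Set.Ioi 0)) (nhds σ) := by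
    have hf1 : Tendsto (fun δ : ℝ => 2 * σ ^ 2 * (σ + δ) ^ 2 / (2 * σ + δ))
        (nhdsWithin 0 (Set.Ioi 0)) (nhds (2 * σ ^ 2 * σ ^ 2 / (2 * σ))) := by
      have hc : ContinuousAt (fun δ : ℝ => 2 * σ ^ 2 * (σ + δ) ^ 2 / (2 * σ + δ)) 0 := by
        apply ContinuousAt.div
        · fun_prop
        · fun_prop
        · simpa using (by positivity : (0:ℝ) < 2 * σ).ne'
      have h2 := hc.tendsto.mono_left (nhdsWithin_le_nhds (s := Set.Ioi 0))
      simpa using h2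
    have hprod := hf1.mul hslope
    have hval : 2 * σ ^ 2 * σ ^ 2 / (2 * σ) * σ⁻¹ = σ ^ 2 := by field_simp
    rw [hval] at hprod
    have hinner : Tendsto (fun δ : ℝ =>
        2 * σ ^ 2 * (σ + δ) ^ 2 * Real.log ((σ + δ) / σ) / ((σ + δ) ^ 2 - σ ^ 2))
        (nhdsWithin 0 (Set.Ioi 0)) (nhds (σ ^ 2)) := by
      apply hprod.congr'
      filter_upwards [self_mem_nhdsWithin] with δ hδ
      have hδ' : (0:ℝ) < δ := hδ
      have hr : (σ + δ) ^ 2 - σ ^ 2 = δ * (2 * σ + δ) := by ring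
      rw [hr, div_mul_div_comm, mul_comm (2 * σ + δ) δ]
    have hsq := (Real.continuous_sqrt.tendsto (σ ^ 2)).comp hinner
    rw [Real.sqrt_sq hσ.le] at hsq
    exact hsq
  have hbT : Tendsto (fun δ : ℝ => gc σ δ / σ) (nhdsWithin 0 (Set.Ioi 0)) (nhds 1) := by
    have := hcT.div_const σ
    rwa [div_self hσ.ne'] at this
  have haT : Tendsto (fun δ : ℝ => gc σ δ / (σ + δ)) (nhdsWithin 0 (Set.Ioi 0)) (nhds 1) := by
    have := hcT.div htσδ hσ.ne'
    rwa [div_self hσ.ne'] at this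
  have hquot : Tendsto (fun δ : ℝ => (gc σ δ / σ - gc σ δ / (σ + δ)) / δ)
      (nhdsWithin 0 (Set.Ioi 0)) (nhds σ⁻¹) := by
    have hden : Tendsto (fun δ : ℝ => σ * (σ + δ)) (nhdsWithin 0 (Set.Ioi 0))
        (nhds (σ * σ)) := tendsto_const_nhds.mul htσδ
    have h := hcT.div hden (by positivity : (0:ℝ) < σ * σ).ne'
    have hval : σ / (σ * σ) = σ⁻¹ := by field_simp
    rw [hval] at h
    apply h.congr'
    filter_upwards [self_mem_nhdsWithin] with δ hδ
    have hδ' : (0:ℝ) < δ := hδ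
    have hσδ : σ + δ ≠ 0 := by positivity
    simp only [Pi.div_apply]
    field_simp
    ring
  set K : ℝ := 2 * gaussianDensity 1 1 with hK
  have hlo : (fun p : ℝ × ℝ => gG p.1 - gG p.2 - (p.1 - p.2) * K)
      =o[nhds ((1:ℝ), (1:ℝ))] fun p : ℝ × ℝ => p.1 - p.2 := by
    have h := HasStrictFDerivAt.isLittleO gG_strict
    rw [hK]
    simpa using h
  have hpair : Tendsto (fun δ : ℝ => (gc σ δ / σ, gc σ δ / (σ + δ)))
      (nhdsWithin 0 (Set.Ioi 0)) (nhds ((1:ℝ), 1)) := by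
    rw [nhds_prod_eq]
    exact hbT.prodMk haT
  have hcomp := hlo.comp_tendsto hpair
  have hba : (fun δ : ℝ => gc σ δ / σ - gc σ δ / (σ + δ))
      =O[nhdsWithin 0 (Set.Ioi 0)] (fun δ : ℝ => δ) := by
    apply Asymptotics.isBigO_of_div_tendsto_nhds _ σ⁻¹
    · exact hquot
    · filter_upwards [self_mem_nhdsWithin] with δ hδ
      have hδ' : (0:ℝ) < δ := hδ
      intro h
      exact absurd h hδ'.ne'
  have hsmall := hcomp.trans_isBigO hba
  have h0 : Tendsto (fun δ : ℝ =>
      (gG (gc σ δ / σ) - gG (gc σ δ / (σ + δ)) - (gc σ δ / σ - gc σ δ / (σ + δ)) * K) / δ)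
      (nhdsWithin 0 (Set.Ioi 0)) (nhds 0) := hsmall.tendsto_div_nhds_zero
  have hfinal : Tendsto (fun δ : ℝ =>
      2 * ((gG (gc σ δ / σ) - gG (gc σ δ / (σ + δ))
          - (gc σ δ / σ - gc σ δ / (σ + δ)) * K) / δ)
        + (2 * K) * ((gc σ δ / σ - gc σ δ / (σ + δ)) / δ))
      (nhdsWithin 0 (Set.Ioi 0)) (nhds (2 * 0 + (2 * K) * σ⁻¹)) :=
    ((h0.const_mul 2).add (hquot.const_mul (2 * K)))
  have hvals : (2 : ℝ) * 0 + (2 * K) * σ⁻¹ = Real.sqrt (8 / (Real.exp 1 * π * σ ^ 2)) := by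
    rw [const_eq hσ, hK]; ring
  rw [← hvals]
  apply hfinal.congr'
  filter_upwards [self_mem_nhdsWithin] with δ hδ
  have hδ' : (0:ℝ) < δ := hδ
  rw [L1_eq' hσ hδ']
  field_simp
  ring
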